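/- Let (X, ‖·‖) be a Banach space and T : X → X a (b,θ)-enriched contraction. With λ = 1/(b+1) and c = θ/(b+1), the Krasnoselskij iteration x_{n+1} = (1−λ)x_n + λT x_n converges to the unique fixed point p and satisfies the error estimate ‖x_{n+i−1} − p‖ ≤ (c^i/(1−c)) ‖x_n − x_{n−1}‖ for all n ≥ 1 and i ≥ 1. -/

import Mathlib

/-- (Berinde–Păcurar) enriched contraction on a Banach space: the
Krasnoselskij iteration with λ = 1/(b+1) converges to the unique fixed point with
the error estimate ‖x_{n+i-1} - p‖ ≤ c^i/(1-c) ‖x_n - x_{n-1}‖, c = θ/(b+1). -/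
theorem stmt_8 {X : Type*} [NormedAddCommGroup X] [NormedSpace ℝ X] [CompleteSpace X]
    (T : X → X) (b θ : ℝ) (hb : 0 ≤ b) (hθ0 : 0 ≤ θ) (hθ : θ < b + 1)
    (hT : ∀ x y, ‖b • (x - y) + (T x - T y)‖ ≤ θ * ‖x - y‖) :
    ∃ p : X, T p = p ∧ (∀ q, T q = q → q = p) ∧
      ∀ xs : ℕ → X,
        (∀ n : ℕ, xs (n + 1) = (1 - 1 / (b + 1)) • xs n + (1 / (b + 1)) • T (xs n)) →
        Filter.Tendsto xs Filter.atTop (nhds p) ∧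
        ∀ n : ℕ, 1 ≤ n → ∀ i : ℕ, 1 ≤ i →
          ‖xs (n + i - 1) - p‖ ≤
            ((θ / (b + 1)) ^ i / (1 - θ / (b + 1))) * ‖xs n - xs (n - 1)‖ := by
  have hb1 : (0:ℝ) < b + 1 := by linarith
  set c : ℝ := θ / (b + 1) with hc_def
  have hc0 : 0 ≤ c := div_nonneg hθ0 hb1.le
  have hc1 : c < 1 := (div_lt_one hb1).mpr hθ
  set S : X → X := fun x => (1 - 1 / (b + 1)) • x + (1 / (b + 1)) • T x with hS_def
  have hS : ∀ x y, ‖S x - S y‖ ≤ c * ‖x - y‖ := by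
    intro x y
    have key : S x - S y = (1 / (b + 1)) • (b • (x - y) + (T x - T y)) := by
      simp only [hS_def]
      match_scalars <;> field_simp <;> ring
    rw [key, norm_smul, Real.norm_eq_abs, abs_of_pos (by positivity : (0:ℝ) < 1/(b+1))]
    calc 1 / (b + 1) * ‖b • (x - y) + (T x - T y)‖
        ≤ 1 / (b + 1) * (θ * ‖x - y‖) := by
          apply mul_le_mul_of_nonneg_left (hT x y) (by positivity)
      _ = c * ‖x - y‖ := by rw [hc_def]; ring
  set K : NNReal := ⟨c, hc0⟩ with hK_def
  have hKc : (K : ℝ) = c := rfl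
  have lip : LipschitzWith K S := by
    apply LipschitzWith.of_dist_le_mul
    intro x y
    rw [dist_eq_norm, dist_eq_norm, hKc]
    exact hS x y
  have hK1 : (K:ℝ) < 1 := by rw [hKc]; exact hc1
  have hCont : ContractingWith K S := ⟨by exact_mod_cast hK1, lip⟩
  set p : X := hCont.fixedPoint S with hp_def
  have hpfix : S p = p := hCont.fixedPoint_isFixedPt
  have hTS : ∀ q, T q = q ↔ S q = q := by
    intro q
    have key : S q - q = (1 / (b + 1)) • (T q - q) := by
      simp only [hS_def]
      match_scalars <;> field_simp <;> ring
    constructor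
    · intro h
      have : S q - q = 0 := by rw [key, h, sub_self, smul_zero]
      exact sub_eq_zero.mp this
    · intro h
      have : (1 / (b + 1)) • (T q - q) = 0 := by rw [← key, h, sub_self]
      rcases smul_eq_zero.mp this with h1 | h2
      · exact absurd h1 (by positivity : (0:ℝ) < 1/(b+1)).ne'
      · exact sub_eq_zero.mp h2
  refine ⟨p, (hTS p).mpr hpfix, fun q hq => hCont.fixedPoint_unique ((hTS q).mp hq), ?_⟩
  intro xs hxs
  have hxsS : ∀ n, xs (n + 1) = S (xs n) := fun n => hxs n
  have hiter : ∀ a j : ℕ, xs (a + j) = S^[j] (xs a) := by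
    intro a j
    induction j with
    | zero => simp
    | succ j ih =>
      rw [← Nat.add_assoc, hxsS, ih, Function.iterate_succ_apply']
  constructor
  · have := hCont.tendsto_iterate_fixedPoint (xs 0)
    refine Filter.Tendsto.congr (fun n => ?_) this
    rw [← hiter 0 n, Nat.zero_add]
  · intro n hn i hi
    have hm : n + i - 1 = (n - 1) + i := by omega
    have hm1 : (n - 1) + i + 1 = n + i := by omega
    have hn1 : (n - 1) + 1 = n := by omega
    have e1 : xs ((n-1) + i) = S^[i] (xs (n-1)) := hiter _ _
    have e2 : xs (n + i) = S^[i] (xs n) := hiter _ _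
    have step1 : dist (xs ((n-1)+i)) p ≤ dist (xs ((n-1)+i)) (xs ((n-1)+i+1)) / (1 - c) := by
      have := hCont.dist_fixedPoint_le (xs ((n-1)+i))
      rwa [← hxsS, hKc] at this
    have step2 : dist (xs ((n-1)+i)) (xs ((n-1)+i+1)) ≤ c ^ i * dist (xs (n-1)) (xs n) := by
      rw [hm1, e1, e2]
      have := (lip.iterate i).dist_le_mul (xs (n-1)) (xs n)
      rwa [NNReal.coe_pow, hKc] at this
    have h1c : (0:ℝ) < 1 - c := by linarith
    calc ‖xs (n + i - 1) - p‖ = dist (xs ((n-1)+i)) p := by rw [hm, dist_eq_norm]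
      _ ≤ dist (xs ((n-1)+i)) (xs ((n-1)+i+1)) / (1 - c) := step1
      _ ≤ c ^ i * dist (xs (n-1)) (xs n) / (1 - c) := by
          gcongr
      _ = (c ^ i / (1 - c)) * ‖xs n - xs (n-1)‖ := by
          rw [dist_comm, dist_eq_norm]; ring
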